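/- Let r, σ, ξ be real numbers with 0 < r ≤ 1 and 0 ≤ σ ≤ 1/4, set β = 1 − 2σ·r·sin²(ξ/2) − r/2, and suppose β² − 1 + r ≥ 0. Then both real roots g± = β ± √(β² − 1 + r) of the equation z² − 2β·z + (1 − r) = 0 satisfy −1 ≤ g± ≤ 1. -/
import Mathlib


/-- Case II of the von Neumann stability analysis of the Telegraph scheme: when the
discriminant is nonnegative, `0 < r ≤ 1` and `0 ≤ σ ≤ 1/4`, both real amplification
factors `β ± √(β² − 1 + r)` lie in `[-1, 1]`. -/
theorem vonNeumann_telegraph_real_case (r σ ξ : ℝ) (hr0 : 0 < r) (hr1 : r ≤ 1)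
    (hσ0 : 0 ≤ σ) (hσ1 : σ ≤ 1 / 4)
    (β : ℝ) (hβ : β = 1 - 2 * σ * r * Real.sin (ξ / 2) ^ 2 - r / 2)
    (hd : β ^ 2 - 1 + r ≥ 0) :
    ((β + Real.sqrt (β ^ 2 - 1 + r)) ^ 2
        - 2 * β * (β + Real.sqrt (β ^ 2 - 1 + r)) + (1 - r) = 0
      ∧ (β - Real.sqrt (β ^ 2 - 1 + r)) ^ 2
        - 2 * β * (β - Real.sqrt (β ^ 2 - 1 + r)) + (1 - r) = 0)
    ∧ (-1 ≤ β + Real.sqrt (β ^ 2 - 1 + r) ∧ β + Real.sqrt (β ^ 2 - 1 + r) ≤ 1)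
    ∧ (-1 ≤ β - Real.sqrt (β ^ 2 - 1 + r) ∧ β - Real.sqrt (β ^ 2 - 1 + r) ≤ 1) := by
  have hs2 : Real.sqrt (β ^ 2 - 1 + r) ^ 2 = β ^ 2 - 1 + r := Real.sq_sqrt hd
  have hsin0 : (0:ℝ) ≤ Real.sin (ξ / 2) ^ 2 := sq_nonneg _
  have hsin1 : Real.sin (ξ / 2) ^ 2 ≤ 1 := Real.sin_sq_le_one _
  have hβub : β ≤ 1 - r / 2 := by
    rw [hβ]
    nlinarith [mul_nonneg (mul_nonneg hσ0 hr0.le) hsin0]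
  have hβlb : 1 - r ≤ β := by
    rw [hβ]
    nlinarith [mul_le_mul_of_nonneg_left hsin1 (mul_nonneg hσ0 hr0.le),
      mul_nonneg (sub_nonneg.2 hσ1) hr0.le]
  have hsnn : 0 ≤ Real.sqrt (β ^ 2 - 1 + r) := Real.sqrt_nonneg _
  have hsub : Real.sqrt (β ^ 2 - 1 + r) ≤ 1 - β := by
    nlinarith [sq_nonneg (Real.sqrt (β ^ 2 - 1 + r) - (1 - β)),
      sq_nonneg (Real.sqrt (β ^ 2 - 1 + r) + (1 - β))]
  have hsub2 : Real.sqrt (β ^ 2 - 1 + r) ≤ 1 + β := by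
    nlinarith [sq_nonneg (Real.sqrt (β ^ 2 - 1 + r) - (1 + β)),
      sq_nonneg (Real.sqrt (β ^ 2 - 1 + r) + (1 + β))]
  refine ⟨⟨by nlinarith, by nlinarith⟩, ⟨by nlinarith, by nlinarith⟩,
    ⟨by nlinarith, by nlinarith⟩⟩
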